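/- arXiv:1109.0418 — 6 statements merged into one kernel-verified Lean document; each statement's English description precedes it below -/
import Mathlib

section
/- The max-consensus protocol x(k) = A^k ⊗ x(0) converges to consensus for all initial conditions if and only if there exists k ∈ ℕ such that A^k = 𝟎. That is: (∃ k, ∀ initial vector x(0) ∈ ℝ^N, ∀ i, (A^k ⊗ x(0))_i = max_j x_j(0)) if and only if ∃ k with A^k = 𝟎. -/
open Finset

/-- Square matrices over the binary tropical semiring `{0, -∞} ⊆ ℝ ∪ {-∞}`,
modeled with entries in `WithBot ℝ` (where `⊥` plays the role of `-∞`). -/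
abbrev TMat (N : ℕ) := Matrix (Fin N) (Fin N) (WithBot ℝ)

/-- A tropical adjacency matrix: all entries in `{0, -∞}` and zero diagonal. -/
def IsTropAdj {N : ℕ} (A : TMat N) : Prop :=
  (∀ i j, A i j = 0 ∨ A i j = ⊥) ∧ ∀ i, A i i = 0

/-- Tropical matrix product: `(A ⊗ B) i j = max_l (A i l + B l j)`. -/
def tropMul {N : ℕ} (A B : TMat N) : TMat N :=
  fun i j => Finset.univ.sup fun l => A i l + B l j

/-- The tropical identity matrix (`0` on the diagonal, `-∞` off it). -/
def tropId (N : ℕ) : TMat N := fun i j => if i = j then 0 else ⊥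

/-- `k`-fold tropical power. -/
def tropPow {N : ℕ} (A : TMat N) : ℕ → TMat N
  | 0 => tropId N
  | k + 1 => tropMul A (tropPow A k)

/-- The all-zero tropical matrix `𝟎`. -/
def zeroMat (N : ℕ) : TMat N := fun _ _ => 0

/-- Tropical matrix-vector product for a real vector: `(A ⊗ x) i = max_j (A i j + x j)`. -/
def tropMulVec {N : ℕ} (A : TMat N) (x : Fin N → ℝ) (i : Fin N) : WithBot ℝ :=
  Finset.univ.sup fun j => A i j + (x j : WithBot ℝ)

/-- The maximum of the entries of a real vector, viewed in `WithBot ℝ`. -/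
def maxVal {N : ℕ} (x : Fin N → ℝ) : WithBot ℝ :=
  Finset.univ.sup fun j => (x j : WithBot ℝ)

/-- The edge relation of the dependency graph `G(A)`:
`Edge A i j` means there is an edge `i → j`, i.e. `A j i = 0`. -/
def Edge {N : ℕ} (A : TMat N) (i j : Fin N) : Prop := A j i = 0

/-- Strong connectivity of a digraph on `Fin N` given by its edge relation. -/
def StronglyConnected {N : ℕ} (E : Fin N → Fin N → Prop) : Prop :=
  ∀ i j, Relation.ReflTransGen E i j

/-- `walkLe E k i j`: there is a directed walk from `i` to `j` of length at most `k`. -/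
def walkLe {N : ℕ} (E : Fin N → Fin N → Prop) : ℕ → Fin N → Fin N → Prop
  | 0 => Eq
  | k + 1 => fun i j => walkLe E k i j ∨ ∃ l, E i l ∧ walkLe E k l j

lemma tropPow_entry_le {N : ℕ} {A : TMat N} (hA : ∀ i j, A i j = 0 ∨ A i j = ⊥) :
    ∀ k i j, tropPow A k i j ≤ 0 := by
  intro k
  induction k with
  | zero =>
    intro i j
    simp only [tropPow, tropId]
    split <;> simp
  | succ k ih =>
    intro i j
    show Finset.univ.sup (fun l => A i l + tropPow A k l j) ≤ 0
    apply Finset.sup_le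
    intro l _
    have h1 : A i l ≤ 0 := by rcases hA i l with h | h <;> simp [h]
    calc A i l + tropPow A k l j ≤ 0 + 0 := add_le_add h1 (ih l j)
      _ = 0 := by simp

/-- The max-consensus protocol `x(k) = A^k ⊗ x(0)` converges to consensus for all
initial conditions iff `∃ k, A^k = 𝟎`. -/
theorem maxConsensus_iff_tropPow_zeroMat {N : ℕ} (hN : 1 ≤ N)
    {A : TMat N} (hA : IsTropAdj A) :
    (∃ k, ∀ x : Fin N → ℝ, ∀ i, tropMulVec (tropPow A k) x i = maxVal x) ↔
    ∃ k, tropPow A k = zeroMat N := by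
  constructor
  · rintro ⟨k, h⟩
    refine ⟨k, ?_⟩
    funext i j
    set x : Fin N → ℝ := fun l => if l = j then (1:ℝ) else 0 with hxdef
    have hmax : maxVal x = ((1:ℝ) : WithBot ℝ) := by
      apply le_antisymm
      · apply Finset.sup_le
        intro l _
        simp only [hxdef]
        split <;> simp
      · have := Finset.le_sup (f := fun l => ((x l : ℝ) : WithBot ℝ)) (Finset.mem_univ j)
        refine le_trans (le_of_eq ?_) this
        simp [hxdef]
    have hx := h x i
    rw [hmax] at hx
    haveI : Nonempty (Fin N) := Fin.pos_iff_nonempty.mp hN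
    obtain ⟨l, -, hl⟩ := Finset.exists_mem_eq_sup Finset.univ
      (Finset.univ_nonempty) (fun l => tropPow A k i l + ((x l : ℝ) : WithBot ℝ))
    rw [tropMulVec] at hx
    rw [hx] at hl
    have hle := tropPow_entry_le hA.1 k i l
    by_cases hlj : l = j
    · subst hlj
      have hxl : x l = 1 := by simp [hxdef]
      rw [hxl] at hl
      show tropPow A k i l = zeroMat N i l
      rw [zeroMat]
      rcases eq_or_ne (tropPow A k i l) ⊥ with hb | hb
      · rw [hb] at hl; simp at hl
      · obtain ⟨b, hb⟩ := WithBot.ne_bot_iff_exists.mp hb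
        rw [← hb] at hl hle ⊢
        rw [show ((b:WithBot ℝ) + (1:ℝ)) = ((b+1 : ℝ) : WithBot ℝ) by push_cast; ring] at hl
        have : b + 1 = 1 := by exact_mod_cast hl.symm
        have : b = 0 := by linarith
        simp [this]
    · have hxl : x l = 0 := by simp [hxdef, hlj]
      rw [hxl] at hl
      have : tropPow A k i l + ((0:ℝ) : WithBot ℝ) ≤ 0 := by
        calc tropPow A k i l + ((0:ℝ) : WithBot ℝ) ≤ 0 + 0 := by
              exact add_le_add hle (by norm_num)
          _ = 0 := by simp
      rw [← hl] at this
      exact absurd this (by norm_num)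
  · rintro ⟨k, hk⟩
    refine ⟨k, fun x i => ?_⟩
    rw [hk]
    simp [tropMulVec, zeroMat, maxVal]
end

section
/- The max-consensus protocol over a fixed network converges for all initial conditions if and only if the dependency graph G(A) is strongly connected. Equivalently: there exists k ∈ ℕ with A^k = 𝟎 if and only if G(A) is strongly connected. -/
open Finset

lemma my_add01 {a b : WithBot ℝ} (ha : a = 0 ∨ a = ⊥) (hb : b = 0 ∨ b = ⊥) :
    (a + b = 0 ∨ a + b = ⊥) ∧ (a + b = 0 ↔ a = 0 ∧ b = 0) := by
  rcases ha with h|h <;> rcases hb with h'|h' <;> subst h <;> subst h' <;> simp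

lemma my_sup01 {N : ℕ} {f : Fin N → WithBot ℝ} (hf : ∀ l, f l = 0 ∨ f l = ⊥) :
    (Finset.univ.sup f = 0 ∨ Finset.univ.sup f = ⊥) ∧
      (Finset.univ.sup f = 0 ↔ ∃ l, f l = 0) := by
  by_cases h : ∃ l, f l = 0
  · obtain ⟨l, hl⟩ := h
    have hle : Finset.univ.sup f ≤ 0 :=
      Finset.sup_le fun x _ => by rcases hf x with h|h <;> simp [h]
    have hge : (0:WithBot ℝ) ≤ Finset.univ.sup f := hl ▸ Finset.le_sup (Finset.mem_univ l)
    have heq : Finset.univ.sup f = 0 := le_antisymm hle hge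
    exact ⟨Or.inl heq, by simp only [heq, true_iff]; exact ⟨l, hl⟩⟩
  · push_neg at h
    have heq : Finset.univ.sup f = ⊥ := by
      refine le_antisymm (Finset.sup_le fun x _ => ?_) bot_le
      rcases hf x with hx|hx
      · exact absurd hx (h x)
      · simp [hx]
    refine ⟨Or.inr heq, ?_⟩
    simp only [heq]
    constructor
    · intro hb; exact absurd hb.symm (by simp)
    · rintro ⟨l, hl⟩; exact absurd hl (h l)

lemma my_walkLe_mono {N : ℕ} {E : Fin N → Fin N → Prop} {k k' : ℕ} (h : k ≤ k')
    {i j : Fin N} (hw : walkLe E k i j) : walkLe E k' i j := by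
  induction h with
  | refl => exact hw
  | step _ ih => exact Or.inl ih

lemma my_walkLe_snoc {N : ℕ} {E : Fin N → Fin N → Prop} {k : ℕ} :
    ∀ {i l j : Fin N}, walkLe E k i l → E l j → walkLe E (k+1) i j := by
  induction k with
  | zero => intro i l j h he; cases h; exact Or.inr ⟨j, he, rfl⟩
  | succ k ih =>
    intro i l j h he
    rcases h with h | ⟨m, hm, hw⟩
    · exact Or.inl (ih h he)
    · exact Or.inr ⟨m, hm, ih hw he⟩

lemma my_walkLe_unsnoc {N : ℕ} {E : Fin N → Fin N → Prop} {k : ℕ} :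
    ∀ {i j : Fin N}, walkLe E (k+1) i j →
      walkLe E k i j ∨ ∃ l, walkLe E k i l ∧ E l j := by
  induction k with
  | zero =>
    intro i j h
    rcases h with h | ⟨l, hl, hw⟩
    · exact Or.inl h
    · cases hw; exact Or.inr ⟨i, rfl, hl⟩
  | succ k ih =>
    intro i j h
    rcases h with h | ⟨m, hm, hw⟩
    · exact Or.inl h
    · rcases ih hw with h' | ⟨l, hl, he⟩
      · exact Or.inl (Or.inr ⟨m, hm, h'⟩)
      · exact Or.inr ⟨l, Or.inr ⟨m, hm, hl⟩, he⟩

lemma my_reflTransGen_iff_walkLe {N : ℕ} {E : Fin N → Fin N → Prop} {i j : Fin N} :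
    Relation.ReflTransGen E i j ↔ ∃ n, walkLe E n i j := by
  constructor
  · intro h
    induction h with
    | refl => exact ⟨0, rfl⟩
    | tail _ he ih => obtain ⟨n, hn⟩ := ih; exact ⟨n + 1, my_walkLe_snoc hn he⟩
  · rintro ⟨n, hn⟩
    induction n generalizing i with
    | zero => cases hn; exact Relation.ReflTransGen.refl
    | succ n ih =>
      rcases hn with h | ⟨l, hl, hw⟩
      · exact ih h
      · exact Relation.ReflTransGen.head hl (ih hw)

lemma my_entry {N : ℕ} {A : TMat N} (hA : IsTropAdj A) (k : ℕ) (i j : Fin N) :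
    (tropPow A k i j = 0 ∨ tropPow A k i j = ⊥) ∧
      (tropPow A k i j = 0 ↔ walkLe (Edge A) k j i) := by
  induction k generalizing i j with
  | zero =>
    simp only [tropPow, tropId, walkLe]
    split <;> rename_i h
    · simp [h]
    · constructor
      · exact Or.inr rfl
      · constructor
        · intro hb; exact absurd hb.symm (by simp)
        · intro hji; exact absurd hji.symm h
  | succ k ih =>
    have hf : ∀ l, A i l + tropPow A k l j = 0 ∨ A i l + tropPow A k l j = ⊥ :=
      fun l => (my_add01 (hA.1 i l) (ih l j).1).1
    have hs := my_sup01 hf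
    refine ⟨hs.1, ?_⟩
    show Finset.univ.sup (fun l => A i l + tropPow A k l j) = 0 ↔ _
    rw [hs.2]
    constructor
    · rintro ⟨l, hl⟩
      have h2 := (my_add01 (hA.1 i l) (ih l j).1).2.mp hl
      exact my_walkLe_snoc ((ih l j).2.mp h2.2) h2.1
    · intro hw
      rcases my_walkLe_unsnoc hw with h | ⟨l, hl, he⟩
      · exact ⟨i, (my_add01 (hA.1 i i) (ih i j).1).2.mpr ⟨hA.2 i, (ih i j).2.mpr h⟩⟩
      · exact ⟨l, (my_add01 (hA.1 i l) (ih l j).1).2.mpr ⟨he, (ih l j).2.mpr hl⟩⟩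

/-- The max-consensus protocol converges for all initial conditions iff `G(A)` is
strongly connected; equivalently, `∃ k, A^k = 𝟎` iff `G(A)` is strongly connected. -/
theorem tropPow_zeroMat_iff_stronglyConnected {N : ℕ} {A : TMat N}
    (hA : IsTropAdj A) :
    (∃ k, tropPow A k = zeroMat N) ↔ StronglyConnected (Edge A) := by
  constructor
  · rintro ⟨k, hk⟩ i j
    have h0 : tropPow A k j i = 0 := by rw [hk]; rfl
    exact my_reflTransGen_iff_walkLe.mpr ⟨k, (my_entry hA k j i).2.mp h0⟩
  · intro hsc
    have h : ∀ p : Fin N × Fin N, ∃ n, walkLe (Edge A) n p.1 p.2 :=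
      fun p => my_reflTransGen_iff_walkLe.mp (hsc p.1 p.2)
    choose f hf using h
    refine ⟨Finset.univ.sup f, ?_⟩
    funext i j
    show tropPow A _ i j = (0 : WithBot ℝ)
    exact (my_entry hA _ i j).2.mpr
      (my_walkLe_mono (Finset.le_sup (Finset.mem_univ (j, i))) (hf (j, i)))
end

section
/- The switching-topology max-consensus protocol x(k+1) = A_k ⊗ x(k) converges to consensus for all initial conditions at step k+1 if and only if the tropical product A_k ⊗ A_{k-1} ⊗ ⋯ ⊗ A_0 equals the all-zero matrix 𝟎. -/
open Finset

/-- The product `A_k ⊗ A_{k-1} ⊗ ⋯ ⊗ A_0` of a switching sequence of matrices. -/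
def seqProd {N : ℕ} (A : ℕ → TMat N) : ℕ → TMat N
  | 0 => A 0
  | k + 1 => tropMul (A (k + 1)) (seqProd A k)

lemma tropMul_binary {N : ℕ} {A B : TMat N}
    (hA : ∀ i j, A i j = 0 ∨ A i j = ⊥) (hB : ∀ i j, B i j = 0 ∨ B i j = ⊥) :
    ∀ i j, tropMul A B i j = 0 ∨ tropMul A B i j = ⊥ := by
  intro i j
  by_cases h : ∃ l, A i l + B l j = 0
  · left
    obtain ⟨l, hl⟩ := h
    refine le_antisymm (Finset.sup_le fun m _ => ?_) (hl ▸ Finset.le_sup (f := fun m => A i m + B m j) (Finset.mem_univ l))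
    rcases hA i m with h1 | h1 <;> rcases hB m j with h2 | h2 <;>
      simp [h1, h2]
  · right
    refine le_bot_iff.mp (Finset.sup_le fun m _ => ?_)
    rcases hA i m with h1 | h1 <;> rcases hB m j with h2 | h2
    · exact absurd ⟨m, by simp [h1, h2]⟩ h
    all_goals simp [h1, h2]

lemma seqProd_binary {N : ℕ} (A : ℕ → TMat N) (hA : ∀ n, IsTropAdj (A n)) (k : ℕ) :
    ∀ i j, seqProd A k i j = 0 ∨ seqProd A k i j = ⊥ := by
  induction k with
  | zero => exact (hA 0).1
  | succ k ih => exact tropMul_binary (hA (k + 1)).1 ih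

/-- The switching-topology max-consensus protocol `x(k+1) = A_k ⊗ x(k)` reaches
consensus at step `k+1` for all initial conditions iff `A_k ⊗ ⋯ ⊗ A_0 = 𝟎`. -/
theorem switching_consensus_iff_seqProd_zeroMat {N : ℕ} (hN : 1 ≤ N)
    (A : ℕ → TMat N) (hA : ∀ n, IsTropAdj (A n)) (k : ℕ) :
    (∀ x : Fin N → ℝ, ∀ i, tropMulVec (seqProd A k) x i = maxVal x) ↔
    seqProd A k = zeroMat N := by
  constructor
  · intro h
    funext i j
    rcases seqProd_binary A hA k i j with hij | hij
    · simp [zeroMat, hij]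
    · exfalso
      set x : Fin N → ℝ := fun l => if l = j then 1 else 0 with hx
      have hcons := h x i
      have h1 : (1 : WithBot ℝ) ≤ maxVal x := by
        have : ((x j : ℝ) : WithBot ℝ) = 1 := by simp [hx]
        exact this ▸ Finset.le_sup (f := fun l => ((x l : ℝ) : WithBot ℝ)) (Finset.mem_univ j)
      have h0 : tropMulVec (seqProd A k) x i ≤ 0 := by
        refine Finset.sup_le fun m _ => ?_
        by_cases hm : m = j
        · subst hm; simp [hij]
        · rcases seqProd_binary A hA k i m with h2 | h2 <;> simp [h2, hx, hm]
      rw [hcons] at h0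
      exact absurd (h1.trans h0) (by norm_num)
  · intro h x i
    rw [h]
    simp [tropMulVec, maxVal, zeroMat]
end

section
/- For tropical adjacency matrices A and B, the dependency graph G(A ⊗ B) is strongly connected if and only if G(A) and G(B) are jointly strongly connected, i.e., the union graph with edge set E(A) ∪ E(B) (equivalently G(A ⊕ B), where ⊕ is entrywise max) is strongly connected. -/
open Finset

lemma edge_tropMul_iff {N : ℕ} {A B : TMat N} (hA : IsTropAdj A) (hB : IsTropAdj B)
    {i j : Fin N} : Edge (tropMul A B) i j ↔ ∃ l, B l i = 0 ∧ A j l = 0 := by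
  constructor
  · intro h
    by_contra hc
    push_neg at hc
    have hall : ∀ l ∈ (Finset.univ : Finset (Fin N)), A j l + B l i = (⊥ : WithBot ℝ) := by
      intro l _
      rcases hA.1 j l with h1 | h1
      · rcases hB.1 l i with h2 | h2
        · exact absurd h1 (hc l h2)
        · rw [h2]; exact WithBot.add_bot _
      · rw [h1]; exact WithBot.bot_add _
    have : (tropMul A B) j i = ⊥ := by
      simpa [tropMul] using Finset.sup_congr rfl hall
    rw [Edge] at h
    rw [h] at this
    exact absurd this (by simp)
  · rintro ⟨l, hB0, hA0⟩
    have hle : (tropMul A B) j i ≤ 0 := by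
      apply Finset.sup_le
      intro m _
      rcases hA.1 j m with h1 | h1 <;> rcases hB.1 m i with h2 | h2 <;>
        simp [h1, h2]
    have hge : (0 : WithBot ℝ) ≤ (tropMul A B) j i := by
      have := Finset.le_sup (f := fun m => A j m + B m i) (Finset.mem_univ l)
      simp only [hA0, hB0] at this
      simpa [tropMul] using this
    exact le_antisymm hle hge

lemma edge_max_left {N : ℕ} {A B : TMat N} (hB : IsTropAdj B)
    {i j : Fin N} (h : A j i = 0) : Edge (fun i j => max (A i j) (B i j)) i j := by
  rcases hB.1 j i with h2 | h2 <;> simp [Edge, h, h2]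

lemma edge_max_right {N : ℕ} {A B : TMat N} (hA : IsTropAdj A)
    {i j : Fin N} (h : B j i = 0) : Edge (fun i j => max (A i j) (B i j)) i j := by
  rcases hA.1 j i with h1 | h1 <;> simp [Edge, h, h1]

/-- `G(A ⊗ B)` is strongly connected iff `G(A)` and `G(B)` are jointly strongly
connected, i.e. `G(A ⊕ B)` (entrywise max) is strongly connected. -/
theorem tropMul_stronglyConnected_iff_jointly {N : ℕ} {A B : TMat N}
    (hA : IsTropAdj A) (hB : IsTropAdj B) :
    StronglyConnected (Edge (tropMul A B)) ↔
    StronglyConnected (Edge (fun i j => max (A i j) (B i j))) := by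
  constructor
  · intro h i j
    refine (h i j).head_induction_on Relation.ReflTransGen.refl ?_
    intro a b hab _ ih
    obtain ⟨l, hBl, hAl⟩ := (edge_tropMul_iff hA hB).mp hab
    exact Relation.ReflTransGen.head (edge_max_right hA hBl)
      (Relation.ReflTransGen.head (edge_max_left hB hAl) ih)
  · intro h i j
    refine Relation.ReflTransGen.mono ?_ _ _ (h i j)
    intro a b hab
    have : A b a = 0 ∨ B b a = 0 := by
      rcases hA.1 b a with h1 | h1
      · exact Or.inl h1
      rcases hB.1 b a with h2 | h2
      · exact Or.inr h2
      · simp [Edge, h1, h2] at hab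
    rcases this with h' | h'
    · exact (edge_tropMul_iff hA hB).mpr ⟨a, hB.2 a, h'⟩
    · exact (edge_tropMul_iff hA hB).mpr ⟨b, h', hA.2 b⟩
end

section
/- The multiplicative semigroup (under tropical product ⊗) generated by tropical adjacency matrices A_1,…,A_m contains the all-zero matrix 𝟎 if and only if the union graph ⋃_{r=1}^m G(A_r) is strongly connected. -/
open Finset

namespace SP
variable {N m : ℕ}

def E01 (M : TMat N) : Prop := ∀ i j, M i j = 0 ∨ M i j = ⊥

lemma e01_tropId : E01 (tropId N) := by
  intro i j; unfold tropId; by_cases h : i = j <;> simp [h]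

lemma tropMul_eq_zero_iff {M B : TMat N} (hM : E01 M) (hB : E01 B) (i j : Fin N) :
    tropMul M B i j = 0 ↔ ∃ k, M i k = 0 ∧ B k j = 0 := by
  constructor
  · intro h
    by_contra hc
    push_neg at hc
    have hb : Finset.univ.sup (fun l => M i l + B l j) = ⊥ := by
      rw [Finset.sup_eq_bot_iff]
      intro k _
      rcases hM i k with h1 | h1
      · rcases hB k j with h2 | h2
        · exact absurd h2 (hc k h1)
        · simp [h2]
      · simp [h1]
    have h' : Finset.univ.sup (fun l => M i l + B l j) = 0 := h
    rw [hb] at h'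
    exact absurd h' (by simp)
  · rintro ⟨k, h1, h2⟩
    have hle : Finset.univ.sup (fun l => M i l + B l j) ≤ 0 := by
      apply Finset.sup_le; intro a _
      rcases hM i a with h' | h' <;> rcases hB a j with h'' | h'' <;> simp [h', h'']
    have hge : (0 : WithBot ℝ) ≤ Finset.univ.sup (fun l => M i l + B l j) := by
      calc (0 : WithBot ℝ) = M i k + B k j := by rw [h1, h2]; simp
        _ ≤ _ := Finset.le_sup (f := fun l => M i l + B l j) (Finset.mem_univ k)
    exact le_antisymm hle hge

lemma e01_tropMul {M B : TMat N} (hM : E01 M) (hB : E01 B) : E01 (tropMul M B) := by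
  intro i j
  by_cases h : ∃ k, M i k = 0 ∧ B k j = 0
  · exact Or.inl ((tropMul_eq_zero_iff hM hB i j).mpr h)
  · right
    show Finset.univ.sup (fun l => M i l + B l j) = ⊥
    rw [Finset.sup_eq_bot_iff]
    intro k _
    rcases hM i k with h1 | h1
    · rcases hB k j with h2 | h2
      · exact absurd ⟨k, h1, h2⟩ h
      · simp [h2]
    · simp [h1]

/-- product of a list of generator matrices -/
def prodL (A : Fin m → TMat N) (l : List (Fin m)) : TMat N :=
  (l.map A).foldr tropMul (tropId N)

lemma prodL_nil (A : Fin m → TMat N) : prodL A [] = tropId N := rfl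

lemma prodL_cons (A : Fin m → TMat N) (r : Fin m) (l : List (Fin m)) :
    prodL A (r :: l) = tropMul (A r) (prodL A l) := rfl

lemma e01_prodL (A : Fin m → TMat N) (hA : ∀ r, IsTropAdj (A r)) (l : List (Fin m)) :
    E01 (prodL A l) := by
  induction l with
  | nil => exact e01_tropId
  | cons r l ih => exact e01_tropMul (fun i j => (hA r).1 i j) ih

lemma prodL_diag (A : Fin m → TMat N) (hA : ∀ r, IsTropAdj (A r)) (l : List (Fin m))
    (i : Fin N) : prodL A l i i = 0 := by
  induction l with
  | nil => simp [prodL, tropId]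
  | cons r l ih =>
    rw [prodL_cons, tropMul_eq_zero_iff (fun i j => (hA r).1 i j) (e01_prodL A hA l)]
    exact ⟨i, (hA r).2 i, ih⟩

lemma prodL_append_zero (A : Fin m → TMat N) (hA : ∀ r, IsTropAdj (A r))
    {l1 l2 : List (Fin m)} {i k j : Fin N}
    (h1 : prodL A l1 i k = 0) (h2 : prodL A l2 k j = 0) :
    prodL A (l1 ++ l2) i j = 0 := by
  induction l1 generalizing i with
  | nil =>
    have : i = k := by
      by_contra hik
      have : prodL A [] i k = ⊥ := by simp [prodL, tropId, hik]
      rw [h1] at this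
      exact absurd this.symm (by simp)
    subst this; exact h2
  | cons r l1 ih =>
    rw [prodL_cons, tropMul_eq_zero_iff (fun i j => (hA r).1 i j) (e01_prodL A hA l1)] at h1
    obtain ⟨k', hk1, hk2⟩ := h1
    rw [List.cons_append, prodL_cons,
      tropMul_eq_zero_iff (fun i j => (hA r).1 i j) (e01_prodL A hA (l1 ++ l2))]
    exact ⟨k', hk1, ih hk2⟩

lemma prodL_mem_zero (A : Fin m → TMat N) (hA : ∀ r, IsTropAdj (A r))
    {r : Fin m} {i j : Fin N} (hr : A r i j = 0) {l : List (Fin m)} (hl : r ∈ l) :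
    prodL A l i j = 0 := by
  induction l with
  | nil => exact absurd hl (List.not_mem_nil (a := r))
  | cons s l ih =>
    rw [prodL_cons, tropMul_eq_zero_iff (fun i j => (hA s).1 i j) (e01_prodL A hA l)]
    rcases List.mem_cons.mp hl with h | h
    · subst h; exact ⟨j, hr, prodL_diag A hA l j⟩
    · exact ⟨i, (hA s).2 i, ih h⟩

lemma path_of_entry (A : Fin m → TMat N) (hA : ∀ r, IsTropAdj (A r)) (l : List (Fin m)) :
    ∀ i j : Fin N, prodL A l i j = 0 →
      Relation.ReflTransGen (fun a b => ∃ r, Edge (A r) a b) j i := by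
  induction l with
  | nil =>
    intro i j h
    have : i = j := by
      by_contra hij
      have : prodL A [] i j = ⊥ := by simp [prodL, tropId, hij]
      rw [h] at this
      exact absurd this.symm (by simp)
    subst this; exact Relation.ReflTransGen.refl
  | cons r l ih =>
    intro i j h
    rw [prodL_cons, tropMul_eq_zero_iff (fun i j => (hA r).1 i j) (e01_prodL A hA l)] at h
    obtain ⟨k, h1, h2⟩ := h
    exact (ih k j h2).tail ⟨r, h1⟩

/-- one "round": product over all generators -/
def rep (k : ℕ) : List (Fin m) := List.flatten (List.replicate k (List.finRange m))

lemma rep_succ (k : ℕ) : (rep (k + 1) : List (Fin m)) = List.finRange m ++ rep k := by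
  simp [rep, List.replicate_succ]

lemma rep_mono (A : Fin m → TMat N) (hA : ∀ r, IsTropAdj (A r)) {i j : Fin N} {k : ℕ}
    (h : prodL A (rep k) i j = 0) {k' : ℕ} (hk : k ≤ k') : prodL A (rep k') i j = 0 := by
  induction k' with
  | zero => exact Nat.le_zero.mp hk ▸ h
  | succ n ih =>
    rcases Nat.lt_or_ge k (n + 1) with hlt | hge
    · have := ih (Nat.lt_succ_iff.mp hlt)
      rw [rep_succ]
      exact prodL_append_zero A hA (prodL_diag A hA _ i) this
    · have : k = n + 1 := le_antisymm hk hge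
      exact this ▸ h

lemma exists_rep (A : Fin m → TMat N) (hA : ∀ r, IsTropAdj (A r)) {i j : Fin N}
    (h : Relation.ReflTransGen (fun a b => ∃ r, Edge (A r) a b) j i) :
    ∃ k, prodL A (rep k) i j = 0 := by
  induction h with
  | refl => exact ⟨0, prodL_diag A hA _ j⟩
  | tail _ hbc ih =>
    obtain ⟨k, hk⟩ := ih
    obtain ⟨r, hr⟩ := hbc
    refine ⟨k + 1, ?_⟩
    rw [rep_succ]
    exact prodL_append_zero A hA
      (prodL_mem_zero A hA hr (List.mem_finRange r)) hk

end SP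

/-- The multiplicative semigroup (under `⊗`) generated by `A_1, …, A_m` contains `𝟎`
iff the union graph `⋃ G(A_r)` is strongly connected. -/
theorem semigroup_contains_zeroMat_iff_union_stronglyConnected {N m : ℕ} (hm : 1 ≤ m)
    (A : Fin m → TMat N) (hA : ∀ r, IsTropAdj (A r)) :
    (∃ l : List (Fin m), l ≠ [] ∧ (l.map A).foldr tropMul (tropId N) = zeroMat N) ↔
    StronglyConnected (fun i j => ∃ r, Edge (A r) i j) := by
  constructor
  · rintro ⟨l, _, hl⟩ i j
    apply SP.path_of_entry A hA l j i
    show SP.prodL A l j i = 0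
    rw [show SP.prodL A l = zeroMat N from hl]
    rfl
  · intro hsc
    have hks : ∀ i j : Fin N, ∃ k, SP.prodL A (SP.rep k) i j = 0 :=
      fun i j => SP.exists_rep A hA (hsc j i)
    choose k hk using hks
    set K : ℕ := Finset.univ.sup fun i => Finset.univ.sup fun j => k i j with hK
    refine ⟨SP.rep (K + 1), ?_, ?_⟩
    · rw [SP.rep_succ]
      intro h
      have : (List.finRange m) = [] := by
        cases (List.append_eq_nil_iff.mp h) with
        | intro h1 h2 => exact h1
      rw [List.finRange_eq_nil_iff] at this
      omega
    · funext i j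
      show SP.prodL A (SP.rep (K + 1)) i j = 0
      apply SP.rep_mono A hA (hk i j)
      have h1 : k i j ≤ Finset.univ.sup fun j => k i j :=
        Finset.le_sup (Finset.mem_univ j)
      have h2 : (Finset.univ.sup fun j => k i j) ≤ K :=
        Finset.le_sup (f := fun i => Finset.univ.sup fun j => k i j) (Finset.mem_univ i)
      omega
end

section
/- For a specific initial value x(0) ∈ ℝ^N whose maximum is attained exactly on a set S of nodes, the max-consensus system reaches consensus at step k (i.e., (A^k ⊗ x(0))_i = max_j x_j(0) for all i) if and only if for every node i there exists a node s ∈ S with (A^k)_{is} = 0; equivalently, A^k ⊗ y = 𝟎-vector where y_i = 0 if x_i(0) = max_j x_j(0) and y_i = -∞ otherwise. -/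
open Finset

/-- Tropical matrix-vector product for a vector with entries in `ℝ ∪ {-∞}`. -/
def tropMulVecB {N : ℕ} (A : TMat N) (y : Fin N → WithBot ℝ) (i : Fin N) : WithBot ℝ :=
  Finset.univ.sup fun j => A i j + y j

lemma tropPow_entry01 {N : ℕ} {A : TMat N} (hA : IsTropAdj A) (k : ℕ) :
    ∀ i j, tropPow A k i j = 0 ∨ tropPow A k i j = ⊥ := by
  induction k with
  | zero =>
    intro i j
    by_cases h : i = j <;> simp [tropPow, tropId, h]
  | succ k ih =>
    intro i j
    by_cases h : ∃ l, A i l + tropPow A k l j = 0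
    · left
      show tropMul A (tropPow A k) i j = 0
      unfold tropMul
      obtain ⟨l, hl⟩ := h
      refine le_antisymm (Finset.sup_le fun m _ => ?_) ?_
      · rcases hA.1 i m with h1 | h1 <;> rcases ih m j with h2 | h2 <;>
          simp [h1, h2]
      · calc (0 : WithBot ℝ) = A i l + tropPow A k l j := hl.symm
          _ ≤ _ := Finset.le_sup (f := fun l => A i l + tropPow A k l j) (Finset.mem_univ l)
    · right
      show tropMul A (tropPow A k) i j = ⊥
      unfold tropMul
      apply (Finset.sup_eq_bot_iff _ _).2
      intro m _
      rcases hA.1 i m with h1 | h1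
      · rcases ih m j with h2 | h2
        · exact absurd ⟨m, by simp [h1, h2]⟩ h
        · simp [h1, h2]
      · simp [h1]

/-- For a specific initial vector `x(0)` with maximum attained on the set
`S = {s : x s = max}`, consensus at step `k` holds iff every node `i` has some `s ∈ S`
with `(A^k) i s = 0`; equivalently `A^k ⊗ y` is the all-zero vector, where `y s = 0`
for `s ∈ S` and `y s = -∞` otherwise. -/
theorem consensus_for_specific_initial_iff {N : ℕ} (hN : 1 ≤ N) {A : TMat N}
    (hA : IsTropAdj A) (x : Fin N → ℝ) (k : ℕ) :
    ((∀ i, tropMulVec (tropPow A k) x i = maxVal x) ↔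
      ∀ i, ∃ s, (x s : WithBot ℝ) = maxVal x ∧ tropPow A k i s = 0) ∧
    ((∀ i, tropMulVec (tropPow A k) x i = maxVal x) ↔
      ∀ i, tropMulVecB (tropPow A k)
        (fun s => if (x s : WithBot ℝ) = maxVal x then (0 : WithBot ℝ) else ⊥) i = 0) := by

  have hne : Nonempty (Fin N) := ⟨⟨0, hN⟩⟩
  have hE := tropPow_entry01 hA k
  obtain ⟨m, _, hm⟩ := Finset.exists_mem_eq_sup (Finset.univ : Finset (Fin N))
    Finset.univ_nonempty (fun j => (x j : WithBot ℝ))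
  have hmax : maxVal x = (x m : WithBot ℝ) := hm
  have hle : ∀ j, (x j : WithBot ℝ) ≤ maxVal x := fun j => by
    unfold maxVal; exact Finset.le_sup (f := fun j => (x j : WithBot ℝ)) (Finset.mem_univ j)
  -- first iff, per node
  have key1 : ∀ i, tropMulVec (tropPow A k) x i = maxVal x ↔
      ∃ s, (x s : WithBot ℝ) = maxVal x ∧ tropPow A k i s = 0 := by
    intro i
    unfold tropMulVec
    constructor
    · intro h
      obtain ⟨j0, _, hj0⟩ := Finset.exists_mem_eq_sup (Finset.univ : Finset (Fin N))
        Finset.univ_nonempty (fun j => tropPow A k i j + (x j : WithBot ℝ))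
      have hterm : tropPow A k i j0 + (x j0 : WithBot ℝ) = maxVal x :=
        hj0.symm.trans h
      rcases hE i j0 with h1 | h1
      · exact ⟨j0, by simpa [h1] using hterm, h1⟩
      · rw [h1, hmax] at hterm; simp at hterm
    · rintro ⟨s, hs, h0⟩
      refine le_antisymm (Finset.sup_le fun j _ => ?_) ?_
      · rcases hE i j with h1 | h1
        · simpa [h1] using hle j
        · simp [h1]
      · calc maxVal x = tropPow A k i s + (x s : WithBot ℝ) := by simp [h0, hs]
          _ ≤ _ := Finset.le_sup (f := fun j => tropPow A k i j + (x j : WithBot ℝ))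
            (Finset.mem_univ s)
  -- second: pointwise equivalence of the two RHS
  have key2 : ∀ i, (∃ s, (x s : WithBot ℝ) = maxVal x ∧ tropPow A k i s = 0) ↔
      tropMulVecB (tropPow A k)
        (fun s => if (x s : WithBot ℝ) = maxVal x then (0 : WithBot ℝ) else ⊥) i = 0 := by
    intro i
    unfold tropMulVecB
    constructor
    · rintro ⟨s, hs, h0⟩
      refine le_antisymm (Finset.sup_le fun j _ => ?_) ?_
      · rcases hE i j with h1 | h1
        · by_cases hj : (x j : WithBot ℝ) = maxVal x <;> simp [h1, hj]
        · simp [h1]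
      · calc (0 : WithBot ℝ) = tropPow A k i s +
            (if (x s : WithBot ℝ) = maxVal x then (0 : WithBot ℝ) else ⊥) := by
              simp [h0, hs]
          _ ≤ _ := Finset.le_sup
            (f := fun j => tropPow A k i j +
              (if (x j : WithBot ℝ) = maxVal x then (0 : WithBot ℝ) else ⊥))
            (Finset.mem_univ s)
    · intro h
      obtain ⟨j0, _, hj0⟩ := Finset.exists_mem_eq_sup (Finset.univ : Finset (Fin N))
        Finset.univ_nonempty (fun j => tropPow A k i j +
          (if (x j : WithBot ℝ) = maxVal x then (0 : WithBot ℝ) else ⊥))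
      have hterm : tropPow A k i j0 +
          (if (x j0 : WithBot ℝ) = maxVal x then (0 : WithBot ℝ) else ⊥) = 0 :=
        hj0.symm.trans h
      rcases hE i j0 with h1 | h1
      · by_cases hj : (x j0 : WithBot ℝ) = maxVal x
        · exact ⟨j0, hj, h1⟩
        · simp [h1, hj] at hterm
      · simp [h1] at hterm
  constructor
  · exact forall_congr' key1
  · exact (forall_congr' key1).trans (forall_congr' key2)
end
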